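/- Let 𝔤 be a real Lie algebra acting by derivations on a commutative associative ℝ-algebra A, i.e., let D : 𝔤 → Der(A) be a Lie algebra homomorphism into the Lie algebra of derivations of A (with the commutator bracket). Let r ∈ 𝔤 ⊗ 𝔤 be antisymmetric (τ(r) = −r for the flip τ of the two tensor factors) and satisfy the classical Yang–Baxter equation in 𝔤 ⊗ 𝔤 ⊗ 𝔤: writing r = Σ_i a_i ⊗ b_i, one has Σ_{i,j} ( [a_i, a_j] ⊗ b_i ⊗ b_j + a_i ⊗ [b_i, a_j] ⊗ b_j + a_i ⊗ a_j ⊗ [b_i, b_j] ) = 0. Define {x, y} := Σ_i D(a_i)(x) · D(b_i)(y) for x, y ∈ A. Then {·,·} is a Poisson bracket on A: bilinear, antisymmetric, a derivation in each argument ({x, y·z} = {x,y}·z + y·{x,z}), and satisfying the Jacobi identity {x,{y,z}} + {y,{z,x}} + {z,{x,y}} = 0. -/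

import Mathlib

open scoped TensorProduct

section Aux

variable (g A : Type*) [LieRing g] [LieAlgebra ℝ g] [CommRing A] [Algebra ℝ A]
  (D : g →ₗ⁅ℝ⁆ Derivation ℝ A A)

/-- Evaluation of the action at a fixed element, as a linear map. -/
noncomputable def auxDl (x : A) : g →ₗ[ℝ] A where
  toFun u := D u x
  map_add' u v := by simp [map_add]
  map_smul' t u := by simp [map_smul]

@[simp] lemma auxDl_apply (x : A) (u : g) : auxDl g A D x u = D u x := rfl

/-- The trilinear map `(u,v,w) ↦ D u x * (D v y * D w z)`. -/
noncomputable def auxTri (x y z : A) : g →ₗ[ℝ] g →ₗ[ℝ] g →ₗ[ℝ] A :=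
  LinearMap.mk₂ ℝ (fun u v => (D u x * D v y) • auxDl g A D z)
    (fun u u' v => by simp [map_add, add_mul, add_smul])
    (fun t u v => by simp [map_smul, smul_mul_assoc, smul_assoc])
    (fun u v v' => by simp [map_add, mul_add, add_smul])
    (fun t u v => by simp [map_smul, mul_smul_comm, smul_assoc])

@[simp] lemma auxTri_apply (x y z : A) (u v w : g) :
    auxTri g A D x y z u v w = D u x * (D v y * D w z) := by
  simp [auxTri, smul_eq_mul]; ring

/-- The bilinear map `(u,v) ↦ c * (E (D u p) * F (D v q))`. -/
noncomputable def auxBil (E F : A →ₗ[ℝ] A) (c p q : A) : g →ₗ[ℝ] g →ₗ[ℝ] A :=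
  LinearMap.mk₂ ℝ (fun u v => c * (E (D u p) * F (D v q)))
    (fun u u' v => by simp [map_add, add_mul, mul_add])
    (fun t u v => by simp [map_smul, smul_mul_assoc, mul_smul_comm])
    (fun u v v' => by simp [map_add, mul_add])
    (fun t u v => by simp [map_smul, smul_mul_assoc, mul_smul_comm])

@[simp] lemma auxBil_apply (E F : A →ₗ[ℝ] A) (c p q : A) (u v : g) :
    auxBil g A D E F c p q u v = c * (E (D u p) * F (D v q)) := rfl

variable (ι : Type*) [Fintype ι] (a b : ι → g)

lemma aux_keyB
    (hanti : (∑ i, b i ⊗ₜ[ℝ] a i : g ⊗[ℝ] g) = - ∑ i, a i ⊗ₜ[ℝ] b i)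
    (B : g →ₗ[ℝ] g →ₗ[ℝ] A) :
    ∑ i, B (b i) (a i) = - ∑ i, B (a i) (b i) := by
  have := congrArg (TensorProduct.lift B) hanti
  simpa [map_sum] using this

lemma aux_keyC
    (hcybe : (∑ i, ∑ j,
        (⁅a i, a j⁆ ⊗ₜ[ℝ] (b i ⊗ₜ[ℝ] b j)
          + a i ⊗ₜ[ℝ] (⁅b i, a j⁆ ⊗ₜ[ℝ] b j)
          + a i ⊗ₜ[ℝ] (a j ⊗ₜ[ℝ] ⁅b i, b j⁆)) : g ⊗[ℝ] (g ⊗[ℝ] g)) = 0)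
    (T : g →ₗ[ℝ] g →ₗ[ℝ] g →ₗ[ℝ] A) :
    ∑ i, ∑ j, (T ⁅a i, a j⁆ (b i) (b j) + T (a i) ⁅b i, a j⁆ (b j)
      + T (a i) (a j) ⁅b i, b j⁆) = 0 := by
  have := congrArg (TensorProduct.lift ((TensorProduct.uncurry (σ₁₂ := RingHom.id ℝ) (M := g) (N := g) (P₂ := A)).comp T)) hcybe
  simpa [map_sum] using this

end Aux

theorem r_matrix_action_induces_poisson_bracket
    (g A : Type*) [LieRing g] [LieAlgebra ℝ g]
    [CommRing A] [Algebra ℝ A]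
    (D : g →ₗ⁅ℝ⁆ Derivation ℝ A A)
    (ι : Type*) [Fintype ι] (a b : ι → g)
    (hanti : (∑ i, b i ⊗ₜ[ℝ] a i : g ⊗[ℝ] g) = - ∑ i, a i ⊗ₜ[ℝ] b i)
    (hcybe : (∑ i, ∑ j,
        (⁅a i, a j⁆ ⊗ₜ[ℝ] (b i ⊗ₜ[ℝ] b j)
          + a i ⊗ₜ[ℝ] (⁅b i, a j⁆ ⊗ₜ[ℝ] b j)
          + a i ⊗ₜ[ℝ] (a j ⊗ₜ[ℝ] ⁅b i, b j⁆)) : g ⊗[ℝ] (g ⊗[ℝ] g)) = 0) :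
    ∀ br : A → A → A, (∀ x y : A, br x y = ∑ i, D (a i) x * D (b i) y) →
      (∀ x x' y : A, br (x + x') y = br x y + br x' y) ∧
      (∀ (t : ℝ) (x y : A), br (t • x) y = t • br x y) ∧
      (∀ x y y' : A, br x (y + y') = br x y + br x y') ∧
      (∀ (t : ℝ) (x y : A), br x (t • y) = t • br x y) ∧
      (∀ x y : A, br x y = - br y x) ∧
      (∀ x y z : A, br x (y * z) = br x y * z + y * br x z) ∧
      (∀ x y z : A, br x (br y z) + br y (br z x) + br z (br x y) = 0) := by
  intro br h
  -- the antisymmetry identity, applied to an arbitrary bilinear expression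
  have keyA : ∀ (E F : A →ₗ[ℝ] A) (c p q : A),
      ∑ i, c * (E (D (a i) p) * F (D (b i) q))
        = -∑ i, c * (E (D (b i) p) * F (D (a i) q)) := by
    intro E F c p q
    have k := aux_keyB g A ι a b hanti (auxBil g A D E F c p q)
    simp only [auxBil_apply] at k
    linear_combination k
  refine ⟨?_, ?_, ?_, ?_, ?_, ?_, ?_⟩
  · intro x x' y; simp [h, map_add, add_mul, Finset.sum_add_distrib]
  · intro t x y; simp [h, map_smul, smul_mul_assoc, Finset.smul_sum]
  · intro x y y'; simp [h, map_add, mul_add, Finset.sum_add_distrib]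
  · intro t x y; simp [h, map_smul, mul_smul_comm, Finset.smul_sum]
  · -- antisymmetry
    intro x y
    rw [h x y, h y x]
    have k := keyA LinearMap.id LinearMap.id 1 x y
    simp only [LinearMap.id_apply, one_mul] at k
    rw [k]
    exact congrArg Neg.neg (Finset.sum_congr rfl fun i _ => mul_comm _ _)
  · -- Leibniz rule
    intro x y z
    simp only [h]
    rw [Finset.sum_mul, Finset.mul_sum, ← Finset.sum_add_distrib]
    refine Finset.sum_congr rfl fun i _ => ?_
    rw [Derivation.leibniz]
    simp only [smul_eq_mul]
    ring
  · -- Jacobi identity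
    intro x y z
    have key_cybe := aux_keyC g A ι a b hcybe (auxTri g A D x y z)
    simp only [auxTri_apply, LieHom.map_lie, Derivation.commutator_apply] at key_cybe
    have expand : ∀ p q s : A,
        (∑ i, ∑ j, D (a i) p * D (b i) (D (a j) q * D (b j) s))
          = (∑ i, ∑ j, D (a i) p * (D (a j) q * D (b i) (D (b j) s)))
            + ∑ i, ∑ j, D (a i) p * (D (b j) s * D (b i) (D (a j) q)) := by
      intro p q s
      rw [← Finset.sum_add_distrib]
      refine Finset.sum_congr rfl fun i _ => ?_
      rw [← Finset.sum_add_distrib]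
      refine Finset.sum_congr rfl fun j _ => ?_
      rw [Derivation.leibniz]
      simp only [smul_eq_mul]
      ring
    -- transform each of the six double sums
    have hA2 : (∑ i, ∑ j, D (a i) x * (D (b j) z * D (b i) (D (a j) y)))
        = ∑ i, ∑ j, D (a i) x * (D (b i) (D (a j) y) * D (b j) z) :=
      Finset.sum_congr rfl fun i _ => Finset.sum_congr rfl fun j _ => by ring
    have hB2 : (∑ i, ∑ j, D (a i) y * (D (b j) x * D (b i) (D (a j) z)))
        = -∑ i, ∑ j, D (a i) x * (D (a j) y * D (b j) (D (b i) z)) := by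
      have step : ∀ i, (∑ j, D (a i) y * (D (b j) x * D (b i) (D (a j) z)))
          = -∑ j, D (a i) y * (((D (b i) : A →ₗ[ℝ] A)) (D (b j) z) * D (a j) x) := by
        intro i
        have k := keyA ((D (b i) : A →ₗ[ℝ] A)) LinearMap.id (D (a i) y) z x
        simp only [LinearMap.id_apply] at k
        rw [← k]
        exact Finset.sum_congr rfl fun j _ => by simp only [Derivation.coeFn_coe]; ring
      calc (∑ i, ∑ j, D (a i) y * (D (b j) x * D (b i) (D (a j) z)))
          = ∑ i, -∑ j, D (a i) y * (((D (b i) : A →ₗ[ℝ] A)) (D (b j) z) * D (a j) x) :=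
            Finset.sum_congr rfl fun i _ => step i
        _ = -∑ i, ∑ j, D (a i) y * (D (b i) (D (b j) z) * D (a j) x) := by
            simp only [Derivation.coeFn_coe]; rw [← Finset.sum_neg_distrib]
        _ = -∑ j, ∑ i, D (a i) y * (D (b i) (D (b j) z) * D (a j) x) := by
            rw [Finset.sum_comm]
        _ = -∑ i, ∑ j, D (a j) y * (D (b j) (D (b i) z) * D (a i) x) := rfl
        _ = -∑ i, ∑ j, D (a i) x * (D (a j) y * D (b j) (D (b i) z)) := by
            exact congrArg Neg.neg (Finset.sum_congr rfl fun i _ =>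
              Finset.sum_congr rfl fun j _ => by ring)
    have hC1 : (∑ i, ∑ j, D (a i) z * (D (a j) x * D (b i) (D (b j) y)))
        = -∑ i, ∑ j, D (a i) x * (D (a j) (D (b i) y) * D (b j) z) := by
      rw [Finset.sum_comm]
      have step : ∀ j, (∑ i, D (a i) z * (D (a j) x * D (b i) (D (b j) y)))
          = -∑ i, D (a j) x * (D (b i) z * D (a i) (D (b j) y)) := by
        intro j
        have k := keyA LinearMap.id LinearMap.id (D (a j) x) z (D (b j) y)
        simp only [LinearMap.id_apply] at k
        rw [← k]
        exact Finset.sum_congr rfl fun i _ => by ring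
      calc (∑ j, ∑ i, D (a i) z * (D (a j) x * D (b i) (D (b j) y)))
          = ∑ j, -∑ i, D (a j) x * (D (b i) z * D (a i) (D (b j) y)) :=
            Finset.sum_congr rfl fun j _ => step j
        _ = -∑ j, ∑ i, D (a j) x * (D (b i) z * D (a i) (D (b j) y)) := by
            rw [← Finset.sum_neg_distrib]
        _ = -∑ i, ∑ j, D (a i) x * (D (b j) z * D (a j) (D (b i) y)) := rfl
        _ = -∑ i, ∑ j, D (a i) x * (D (a j) (D (b i) y) * D (b j) z) :=
            congrArg Neg.neg (Finset.sum_congr rfl fun i _ =>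
              Finset.sum_congr rfl fun j _ => by ring)
    have hC2 : (∑ i, ∑ j, D (a i) z * (D (b j) y * D (b i) (D (a j) x)))
        = -∑ i, ∑ j, D (a j) (D (a i) x) * (D (b i) y * D (b j) z) := by
      rw [Finset.sum_comm]
      have step : ∀ j, (∑ i, D (a i) z * (D (b j) y * D (b i) (D (a j) x)))
          = -∑ i, D (b j) y * (D (b i) z * D (a i) (D (a j) x)) := by
        intro j
        have k := keyA LinearMap.id LinearMap.id (D (b j) y) z (D (a j) x)
        simp only [LinearMap.id_apply] at k
        rw [← k]
        exact Finset.sum_congr rfl fun i _ => by ring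
      calc (∑ j, ∑ i, D (a i) z * (D (b j) y * D (b i) (D (a j) x)))
          = ∑ j, -∑ i, D (b j) y * (D (b i) z * D (a i) (D (a j) x)) :=
            Finset.sum_congr rfl fun j _ => step j
        _ = -∑ j, ∑ i, D (b j) y * (D (b i) z * D (a i) (D (a j) x)) := by
            rw [← Finset.sum_neg_distrib]
        _ = -∑ i, ∑ j, D (b i) y * (D (b j) z * D (a j) (D (a i) x)) := rfl
        _ = -∑ i, ∑ j, D (a j) (D (a i) x) * (D (b i) y * D (b j) z) :=
            congrArg Neg.neg (Finset.sum_congr rfl fun i _ =>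
              Finset.sum_congr rfl fun j _ => by ring)
    have hB1 : (∑ i, ∑ j, D (a i) y * (D (a j) z * D (b i) (D (b j) x)))
        = ∑ i, ∑ j, D (a i) (D (a j) x) * (D (b i) y * D (b j) z) := by
      have step1 : ∀ i, (∑ j, D (a i) y * (D (a j) z * D (b i) (D (b j) x)))
          = -∑ j, D (a i) y * (D (b j) z * D (b i) (D (a j) x)) := by
        intro i
        have k := keyA LinearMap.id ((D (b i) : A →ₗ[ℝ] A)) (D (a i) y) z x
        simp only [LinearMap.id_apply, Derivation.coeFn_coe] at k
        rw [← k]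
      have step2 : ∀ j, (∑ i, D (a i) y * (D (b j) z * D (b i) (D (a j) x)))
          = -∑ i, D (b j) z * (D (b i) y * D (a i) (D (a j) x)) := by
        intro j
        have k := keyA LinearMap.id LinearMap.id (D (b j) z) y (D (a j) x)
        simp only [LinearMap.id_apply] at k
        rw [← k]
        exact Finset.sum_congr rfl fun i _ => by ring
      calc (∑ i, ∑ j, D (a i) y * (D (a j) z * D (b i) (D (b j) x)))
          = ∑ i, -∑ j, D (a i) y * (D (b j) z * D (b i) (D (a j) x)) :=
            Finset.sum_congr rfl fun i _ => step1 i
        _ = -∑ i, ∑ j, D (a i) y * (D (b j) z * D (b i) (D (a j) x)) := by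
            rw [← Finset.sum_neg_distrib]
        _ = -∑ j, ∑ i, D (a i) y * (D (b j) z * D (b i) (D (a j) x)) := by
            rw [Finset.sum_comm]
        _ = -∑ j, -∑ i, D (b j) z * (D (b i) y * D (a i) (D (a j) x)) :=
            congrArg Neg.neg (Finset.sum_congr rfl fun j _ => step2 j)
        _ = ∑ j, ∑ i, D (b j) z * (D (b i) y * D (a i) (D (a j) x)) := by
            simp only [Finset.sum_neg_distrib, neg_neg]
        _ = ∑ i, ∑ j, D (b i) z * (D (b j) y * D (a j) (D (a i) x)) := by
            rw [Finset.sum_comm]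
        _ = ∑ i, ∑ j, D (a i) (D (a j) x) * (D (b i) y * D (b j) z) := by
            rw [Finset.sum_comm]
            exact Finset.sum_congr rfl fun i _ =>
              Finset.sum_congr rfl fun j _ => by ring
    simp only [h, map_sum, Finset.mul_sum]
    rw [expand x y z, expand y z x, expand z x y, hA2, hB1, hB2, hC1, hC2]
    calc (∑ i, ∑ j, D (a i) x * (D (a j) y * D (b i) (D (b j) z)))
            + (∑ i, ∑ j, D (a i) x * (D (b i) (D (a j) y) * D (b j) z))
          + ((∑ i, ∑ j, D (a i) (D (a j) x) * (D (b i) y * D (b j) z))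
            + -∑ i, ∑ j, D (a i) x * (D (a j) y * D (b j) (D (b i) z)))
          + ((-∑ i, ∑ j, D (a i) x * (D (a j) (D (b i) y) * D (b j) z))
            + -∑ i, ∑ j, D (a j) (D (a i) x) * (D (b i) y * D (b j) z))
        = ∑ i, ∑ j,
            ((D (a i) (D (a j) x) - D (a j) (D (a i) x)) * (D (b i) y * D (b j) z)
              + D (a i) x * ((D (b i) (D (a j) y) - D (a j) (D (b i) y)) * D (b j) z)
              + D (a i) x * (D (a j) y * (D (b i) (D (b j) z) - D (b j) (D (b i) z)))) := by
          simp only [← Finset.sum_neg_distrib, ← Finset.sum_add_distrib]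
          exact Finset.sum_congr rfl fun i _ =>
            Finset.sum_congr rfl fun j _ => by ring
      _ = 0 := key_cybe
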